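/- arXiv:2410.15129 — 9 statements merged into one kernel-verified Lean document; each statement's English description precedes it below -/
import Mathlib

section
/- Let H be a self-adjoint operator on a finite-dimensional complex inner product space, ψ a unit vector with energy E = ⟨ψ, Hψ⟩ and variance R² = ⟨ψ, H²ψ⟩ − E². If α < β are reals with R² < (β − E)(E − α), then H has at least one eigenvalue in the open interval (α, β). -/
/-- If `R² < (β − E)(E − α)` then the self-adjoint operator `T` has an
eigenvalue in the open interval `(α, β)`. -/
theorem kato_eigenvalue_exists
    {V : Type*} [NormedAddCommGroup V] [InnerProductSpace ℂ V]
    [FiniteDimensional ℂ V]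
    (T : V →ₗ[ℂ] V) (hT : T.IsSymmetric)
    (ψ : V) (hψ : ‖ψ‖ = 1) (Eψ R2 α β : ℝ)
    (hE : (inner ℂ ψ (T ψ) : ℂ) = (Eψ : ℂ))
    (hR : (inner ℂ ψ (T (T ψ)) : ℂ) = ((R2 + Eψ ^ 2 : ℝ) : ℂ))
    (hαβ : α < β) (hK : R2 < (β - Eψ) * (Eψ - α)) :
    ∃ μ : ℝ, α < μ ∧ μ < β ∧ Module.End.HasEigenvalue T (μ : ℂ) := by
  classical
  set n := Module.finrank ℂ V with hn
  have hfin : Module.finrank ℂ V = n := rfl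
  set b := hT.eigenvectorBasis hfin with hb
  set lam := hT.eigenvalues hfin with hlam
  set c : Fin n → ℂ := fun i => inner ℂ (b i) ψ with hc
  set w : Fin n → ℝ := fun i => Complex.normSq (c i) with hw
  have hbw : ∀ i, (inner ℂ ψ (b i) * inner ℂ (b i) ψ : ℂ) = ((w i : ℝ) : ℂ) := by
    intro i
    rw [← inner_conj_symm (b i) ψ]
    simp [hw, hc, Complex.normSq_eq_conj_mul_self]
  have hTb : ∀ i, (inner ℂ (b i) (T ψ) : ℂ) = (lam i : ℂ) * inner ℂ (b i) ψ := by
    intro i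
    rw [← hT (b i) ψ, hT.apply_eigenvectorBasis hfin i, inner_smul_left]
    simp
    rfl
  -- sum of weights = 1
  have h1 : ∑ i, w i = 1 := by
    have := b.sum_inner_mul_inner ψ ψ
    have hinner : (inner ℂ ψ ψ : ℂ) = 1 := by
      rw [inner_self_eq_norm_sq_to_K, hψ]; norm_num
    rw [hinner] at this
    have : ((∑ i, w i : ℝ) : ℂ) = ((1 : ℝ) : ℂ) := by
      push_cast
      rw [← this]
      exact Finset.sum_congr rfl fun i _ => (hbw i).symm
    exact_mod_cast this
  -- first moment
  have h2 : ∑ i, lam i * w i = Eψ := by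
    have := b.sum_inner_mul_inner ψ (T ψ)
    rw [hE] at this
    have : ((∑ i, lam i * w i : ℝ) : ℂ) = ((Eψ : ℝ) : ℂ) := by
      push_cast
      rw [← this]
      refine Finset.sum_congr rfl fun i _ => ?_
      rw [hTb i]
      rw [show (inner ℂ ψ (b i) : ℂ) * ((lam i : ℂ) * inner ℂ (b i) ψ)
          = (lam i : ℂ) * (inner ℂ ψ (b i) * inner ℂ (b i) ψ) by ring, hbw i]
    exact_mod_cast this
  -- second moment
  have hTb2 : ∀ i, (inner ℂ (b i) (T (T ψ)) : ℂ)
      = (lam i : ℂ) ^ 2 * inner ℂ (b i) ψ := by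
    intro i
    rw [← hT (b i) (T ψ), hT.apply_eigenvectorBasis hfin i, inner_smul_left,
      hTb i, RCLike.conj_ofReal]
    rw [← hlam, sq]
    exact (mul_assoc _ _ _).symm
  have h3 : ∑ i, lam i ^ 2 * w i = R2 + Eψ ^ 2 := by
    have h0 := b.sum_inner_mul_inner ψ (T (T ψ))
    rw [hR] at h0
    have h5 : ((∑ i, lam i ^ 2 * w i : ℝ) : ℂ)
        = ∑ i, (inner ℂ ψ (b i) * inner ℂ (b i) (T (T ψ)) : ℂ) := by
      push_cast
      refine Finset.sum_congr rfl fun i _ => ?_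
      rw [hTb2 i]
      rw [show (inner ℂ ψ (b i) : ℂ) * ((lam i : ℂ) ^ 2 * inner ℂ (b i) ψ)
          = (lam i : ℂ) ^ 2 * (inner ℂ ψ (b i) * inner ℂ (b i) ψ) by ring, hbw i]
    have := h5.trans h0
    exact_mod_cast this
  -- key inequality
  have hkey : ∑ i, (lam i - α) * (lam i - β) * w i < 0 := by
    have : ∑ i, (lam i - α) * (lam i - β) * w i
        = (∑ i, lam i ^ 2 * w i) - (α + β) * (∑ i, lam i * w i)
          + α * β * (∑ i, w i) := by
      rw [Finset.mul_sum, Finset.mul_sum, ← Finset.sum_sub_distrib,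
        ← Finset.sum_add_distrib]
      exact Finset.sum_congr rfl fun i _ => by ring
    rw [this, h1, h2, h3]
    nlinarith [hK]
  by_contra hcon
  push_neg at hcon
  have hnonneg : ∀ i ∈ Finset.univ, 0 ≤ (lam i - α) * (lam i - β) * w i := by
    intro i _
    have hwi : 0 ≤ w i := Complex.normSq_nonneg _
    have heig := hT.hasEigenvalue_eigenvalues hfin i
    have : ¬ (α < lam i ∧ lam i < β) := by
      intro ⟨h4, h5⟩
      exact absurd heig ((hcon (lam i) h4 h5))
    rcases not_and_or.mp this with h | h
    · push_neg at h
      exact mul_nonneg ((by nlinarith : 0 ≤ (lam i - α) * (lam i - β))) hwi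
    · push_neg at h
      exact mul_nonneg (mul_nonneg (by linarith) (by linarith)) hwi
  exact absurd (Finset.sum_nonneg hnonneg) (not_le.mpr hkey)
end

section
/- Let H be a self-adjoint operator on a finite-dimensional complex inner product space, ψ a unit vector with energy E and variance R². If α < β satisfy R² < (β − E)(E − α) and H has exactly one eigenvalue λ in (α, β), then E − R²/(β − E) ≤ λ ≤ E + R²/(E − α) (Kato's inequality). -/
/-- Kato's inequality: if the self-adjoint operator `T` has exactly one
eigenvalue `lam` in `(α, β)` and `R² < (β − E)(E − α)`, then
`E − R²/(β − E) ≤ lam ≤ E + R²/(E − α)`. -/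
theorem kato_inequality
    {V : Type*} [NormedAddCommGroup V] [InnerProductSpace ℂ V]
    [FiniteDimensional ℂ V]
    (T : V →ₗ[ℂ] V) (hT : T.IsSymmetric)
    (ψ : V) (hψ : ‖ψ‖ = 1) (Eψ R2 α β lam : ℝ)
    (hE : (inner ℂ ψ (T ψ) : ℂ) = (Eψ : ℂ))
    (hR : (inner ℂ ψ (T (T ψ)) : ℂ) = ((R2 + Eψ ^ 2 : ℝ) : ℂ))
    (hαβ : α < β) (hK : R2 < (β - Eψ) * (Eψ - α))
    (hlam : Module.End.HasEigenvalue T (lam : ℂ))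
    (hlam_mem : α < lam ∧ lam < β)
    (huniq : ∀ μ : ℝ, Module.End.HasEigenvalue T (μ : ℂ) →
      α < μ → μ < β → μ = lam) :
    Eψ - R2 / (β - Eψ) ≤ lam ∧ lam ≤ Eψ + R2 / (Eψ - α) := by
  classical
  obtain ⟨hal, hlb⟩ := hlam_mem
  have hn : Module.finrank ℂ V = Module.finrank ℂ V := rfl
  set b := hT.eigenvectorBasis hn with hb
  set μ := hT.eigenvalues hn with hμ
  have hTψψ : (inner ℂ (T ψ) ψ : ℂ) = (Eψ : ℂ) := by
    rw [← inner_conj_symm, hE, Complex.conj_ofReal]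
  have hTT : (inner ℂ (T ψ) (T ψ) : ℂ) = ((R2 + Eψ ^ 2 : ℝ) : ℂ) := (hT ψ (T ψ)).trans hR
  have hψψ : (inner ℂ ψ ψ : ℂ) = 1 := by
    rw [inner_self_eq_norm_sq_to_K, hψ]; norm_num
  -- the key spectral inequality
  have key : ∀ s t : ℝ, (∀ i, 0 ≤ (μ i - s) * (μ i - t)) →
      0 ≤ R2 + Eψ ^ 2 - (s + t) * Eψ + s * t := by
    intro s t h
    have h1 : (inner ℂ (T ψ - (s : ℂ) • ψ) (T ψ - (t : ℂ) • ψ) : ℂ)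
        = ((R2 + Eψ ^ 2 - (s + t) * Eψ + s * t : ℝ) : ℂ) := by
      rw [inner_sub_left, inner_sub_right, inner_sub_right,
        inner_smul_left, inner_smul_right, inner_smul_left, inner_smul_right,
        hTT, hTψψ, hE, hψψ, Complex.conj_ofReal]
      push_cast; ring
    have hrepr : ∀ (u : ℝ) (i), b.repr (T ψ - (u : ℂ) • ψ) i
        = ((μ i : ℂ) - u) * b.repr ψ i := by
      intro u i
      simp only [map_sub, map_smul, PiLp.sub_apply, PiLp.smul_apply, smul_eq_mul,
        hb, hμ, hT.eigenvectorBasis_apply_self_apply hn ψ i]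
      simp only [RCLike.ofReal_alg, Complex.real_smul]
      ring
    have h2 : (inner ℂ (T ψ - (s : ℂ) • ψ) (T ψ - (t : ℂ) • ψ) : ℂ)
        = ∑ i, (((μ i - s) * (μ i - t) * Complex.normSq (b.repr ψ i) : ℝ) : ℂ) := by
      rw [← b.repr.inner_map_map, PiLp.inner_apply]
      refine Finset.sum_congr rfl fun i _ => ?_
      rw [hrepr s i, hrepr t i]
      simp only [RCLike.inner_apply, map_mul, map_sub, Complex.conj_ofReal]
      push_cast [Complex.normSq_eq_conj_mul_self]
      ring
    have h3 : (R2 + Eψ ^ 2 - (s + t) * Eψ + s * t : ℝ)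
        = ∑ i, (μ i - s) * (μ i - t) * Complex.normSq (b.repr ψ i) := by
      have h4 := h1.symm.trans h2
      rw [← Complex.ofReal_sum] at h4
      exact_mod_cast h4
    rw [h3]
    exact Finset.sum_nonneg fun i _ => mul_nonneg (h i) (Complex.normSq_nonneg _)
  -- classification of eigenvalues
  have eig : ∀ i, μ i ≤ α ∨ μ i = lam ∨ β ≤ μ i := by
    intro i
    by_contra hcon
    push_neg at hcon
    obtain ⟨g1, g2, g3⟩ := hcon
    have he : Module.End.HasEigenvalue T ((μ i : ℝ) : ℂ) := by
      exact_mod_cast hT.hasEigenvalue_eigenvalues hn i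
    exact g2 (huniq (μ i) he g1 g3)
  have hR2 : 0 ≤ R2 := by
    have := key Eψ Eψ (fun i => mul_self_nonneg _)
    nlinarith
  have hEβ : Eψ < β := by
    by_contra hcon
    push_neg at hcon
    have h1 : α < Eψ := lt_of_lt_of_le hαβ hcon
    nlinarith
  have hαE : α < Eψ := by
    by_contra hcon
    push_neg at hcon
    have h1 : Eψ < β := lt_of_le_of_lt hcon hαβ
    nlinarith
  have k1 := key lam β (fun i => by
    rcases eig i with h | h | h
    · nlinarith
    · rw [h]; simp
    · nlinarith)
  have k2 := key α lam (fun i => by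
    rcases eig i with h | h | h
    · nlinarith
    · rw [h]; simp
    · nlinarith)
  constructor
  · rw [sub_le_iff_le_add, ← sub_le_iff_le_add',
      le_div_iff₀ (by linarith : (0:ℝ) < β - Eψ)]
    nlinarith
  · rw [← sub_le_iff_le_add', le_div_iff₀ (by linarith : (0:ℝ) < Eψ - α)]
    nlinarith
end

section
/- Let H be a self-adjoint operator on a finite-dimensional complex inner product space whose lowest eigenvalue E_gs is simple (isolated), and let E_es be the second-lowest point of the spectrum. If ψ is a unit vector with ⟨ψ, Hψ⟩ < E_es, then E_gs ≥ ⟨ψ, Hψ⟩ − (⟨ψ, H²ψ⟩ − ⟨ψ, Hψ⟩²)/(E_es − ⟨ψ, Hψ⟩) (Temple's inequality). -/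
/-- Temple's inequality: for a self-adjoint operator with lowest eigenvalue
`Egs` and second-lowest spectral point `Ees`, and a unit vector `ψ` with
energy `Eψ < Ees`, one has `Egs ≥ Eψ − R²/(Ees − Eψ)`. -/
theorem temple_inequality
    {V : Type*} [NormedAddCommGroup V] [InnerProductSpace ℂ V]
    [FiniteDimensional ℂ V]
    (T : V →ₗ[ℂ] V) (hT : T.IsSymmetric)
    (Egs Ees : ℝ)
    (hgs_eig : Module.End.HasEigenvalue T (Egs : ℂ))
    (hgs_min : ∀ μ : ℝ, Module.End.HasEigenvalue T (μ : ℂ) → Egs ≤ μ)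
    (hes_eig : Module.End.HasEigenvalue T (Ees : ℂ))
    (hgs_lt_es : Egs < Ees)
    (hes_second : ∀ μ : ℝ, Module.End.HasEigenvalue T (μ : ℂ) → μ ≠ Egs → Ees ≤ μ)
    (ψ : V) (hψ : ‖ψ‖ = 1) (Eψ R2 : ℝ)
    (hE : (inner ℂ ψ (T ψ) : ℂ) = (Eψ : ℂ))
    (hR : (inner ℂ ψ (T (T ψ)) : ℂ) = ((R2 + Eψ ^ 2 : ℝ) : ℂ))
    (hlt : Eψ < Ees) :
    Egs ≥ Eψ - R2 / (Ees - Eψ) := by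
  classical
  set n := Module.finrank ℂ V with hn
  have hrank : Module.finrank ℂ V = n := rfl
  set b := hT.eigenvectorBasis hrank with hb
  set μ := hT.eigenvalues hrank with hμ
  set c : Fin n → ℂ := fun i => inner ℂ (b i) ψ with hc
  set p : Fin n → ℝ := fun i => Complex.normSq (c i) with hp
  have happ : ∀ i, T (b i) = (μ i : ℂ) • b i := fun i =>
    hT.apply_eigenvectorBasis hrank i
  have hterm : ∀ (x : V) i, (inner ℂ (b i) (T x) : ℂ) = (μ i : ℂ) * inner ℂ (b i) x := by
    intro x i
    rw [← hT (b i) x, happ i, inner_smul_left]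
    simp
  have hconj : ∀ i, (inner ℂ ψ (b i) : ℂ) = (starRingEnd ℂ) (c i) := fun i =>
    (inner_conj_symm ψ (b i)).symm
  have key : ∀ x : V, (inner ℂ ψ (T x) : ℂ) =
      ∑ i, (starRingEnd ℂ) (c i) * ((μ i : ℂ) * inner ℂ (b i) x) := by
    intro x
    rw [← b.sum_inner_mul_inner ψ (T x)]
    exact Finset.sum_congr rfl fun i _ => by rw [hterm x i, hconj i]
  have hsum1 : (Eψ : ℂ) = ∑ i, ((μ i * p i : ℝ) : ℂ) := by
    rw [← hE, key ψ]
    refine Finset.sum_congr rfl fun i _ => ?_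
    rw [hp]; push_cast
    rw [Complex.normSq_eq_conj_mul_self]; ring
  have hsum2 : ((R2 + Eψ ^ 2 : ℝ) : ℂ) = ∑ i, ((μ i ^ 2 * p i : ℝ) : ℂ) := by
    rw [← hR, key (T ψ)]
    refine Finset.sum_congr rfl fun i _ => ?_
    rw [hterm ψ i, hp]; push_cast
    rw [Complex.normSq_eq_conj_mul_self]; ring
  have hsum3 : (1 : ℂ) = ∑ i, ((p i : ℝ) : ℂ) := by
    have hψ2 : (inner ℂ ψ ψ : ℂ) = 1 := by
      rw [inner_self_eq_norm_sq_to_K, hψ]; norm_num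
    rw [← hψ2, ← b.sum_inner_mul_inner ψ ψ]
    refine Finset.sum_congr rfl fun i _ => ?_
    rw [hconj i, hp]
    rw [Complex.normSq_eq_conj_mul_self]
  have r1 : Eψ = ∑ i, μ i * p i := by
    have := hsum1; push_cast at this; exact_mod_cast this
  have r2 : R2 + Eψ ^ 2 = ∑ i, μ i ^ 2 * p i := by exact_mod_cast hsum2
  have r3 : (1 : ℝ) = ∑ i, p i := by exact_mod_cast hsum3
  have hquad : ∀ i, 0 ≤ p i * ((μ i - Egs) * (μ i - Ees)) := by
    intro i
    have hp0 : 0 ≤ p i := Complex.normSq_nonneg _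
    have heig : Module.End.HasEigenvalue T ((μ i : ℝ) : ℂ) :=
      hT.hasEigenvalue_eigenvalues hrank i
    rcases eq_or_ne (μ i) Egs with h | h
    · rw [h]; simp
    · have h1 : Egs ≤ μ i := hgs_min _ heig
      have h2 : Ees ≤ μ i := hes_second _ heig h
      exact mul_nonneg hp0 (mul_nonneg (by linarith) (by linarith))
  have hsumpos : 0 ≤ ∑ i, p i * ((μ i - Egs) * (μ i - Ees)) :=
    Finset.sum_nonneg fun i _ => hquad i
  have hexp : ∑ i, p i * ((μ i - Egs) * (μ i - Ees))
      = (∑ i, μ i ^ 2 * p i) - (Egs + Ees) * (∑ i, μ i * p i)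
        + Egs * Ees * (∑ i, p i) := by
    rw [Finset.mul_sum, Finset.mul_sum, ← Finset.sum_sub_distrib,
      ← Finset.sum_add_distrib]
    exact Finset.sum_congr rfl fun i _ => by ring
  rw [← r1, ← r2, ← r3] at hexp
  have hineq : (Eψ - Egs) * (Ees - Eψ) ≤ R2 := by nlinarith [hsumpos, hexp]
  have hd : 0 < Ees - Eψ := by linarith
  have : Eψ - Egs ≤ R2 / (Ees - Eψ) := (le_div_iff₀ hd).mpr (by nlinarith)
  linarith
end

section
/- Let H be self-adjoint with an eigenvalue E separated from the rest of the spectrum by gap Δ, and ψ a unit vector with energy 𝓔 and variance R satisfying |𝓔 − E| ≤ R and 2R < Δ. If E is simple with unit eigenvector Ψ, then |⟨Ψ, ψ⟩|² ≥ 1 − 2R²/Δ². -/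
open Finset

/-- Overlap bound in the special case `|𝓔 − E| ≤ R`, `2R < Δ`:
`|⟨Ψ, ψ⟩|² ≥ 1 − 2R²/Δ²`. -/
theorem overlap_bound_special_case
    {V : Type*} [NormedAddCommGroup V] [InnerProductSpace ℂ V]
    [FiniteDimensional ℂ V]
    (T : V →ₗ[ℂ] V) (hT : T.IsSymmetric)
    (Eev Δ : ℝ) (Ψ : V) (hΨ : ‖Ψ‖ = 1)
    (hΨ_eig : T Ψ = (Eev : ℂ) • Ψ)
    (hsimple : Module.finrank ℂ (Module.End.eigenspace T (Eev : ℂ)) = 1)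
    (hΔ_pos : 0 < Δ)
    (hΔ_gap : ∀ μ : ℝ, Module.End.HasEigenvalue T (μ : ℂ) → μ ≠ Eev →
      Δ ≤ |μ - Eev|)
    (ψ : V) (hψ : ‖ψ‖ = 1) (Eψ R : ℝ) (hR_nonneg : 0 ≤ R)
    (hE : (inner ℂ ψ (T ψ) : ℂ) = (Eψ : ℂ))
    (hR : (inner ℂ ψ (T (T ψ)) : ℂ) = ((R ^ 2 + Eψ ^ 2 : ℝ) : ℂ))
    (hclose : |Eψ - Eev| ≤ R) (hgap : 2 * R < Δ) :
    1 - 2 * R ^ 2 / Δ ^ 2 ≤ ‖(inner ℂ Ψ ψ : ℂ)‖ ^ 2 := by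
  classical
  have hn : Module.finrank ℂ V = Module.finrank ℂ V := rfl
  set n := Module.finrank ℂ V with hndef
  set b := hT.eigenvectorBasis hn with hb
  set μ := hT.eigenvalues hn with hμ
  set c : Fin n → ℂ := fun i => inner ℂ (b i) ψ with hc
  have hΨ0 : Ψ ≠ 0 := by intro h; rw [h, norm_zero] at hΨ; norm_num at hΨ
  have hspan : (ℂ ∙ Ψ) = Module.End.eigenspace T (Eev : ℂ) := by
    apply Submodule.eq_of_le_of_finrank_eq
    · rw [Submodule.span_singleton_le_iff_mem]
      exact Module.End.mem_eigenspace_iff.mpr hΨ_eig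
    · rw [finrank_span_singleton hΨ0, hsimple]
  -- generic Parseval-type computation
  have hpar : ∀ x : V, ∑ i, ‖(inner ℂ (b i) x : ℂ)‖ ^ 2 = ‖x‖ ^ 2 := by
    intro x
    have h0 := b.sum_inner_mul_inner x x
    rw [inner_self_eq_norm_sq_to_K] at h0
    have h2 : ∀ i, (inner ℂ x (b i) : ℂ) * inner ℂ (b i) x
        = ((‖(inner ℂ (b i) x : ℂ)‖ ^ 2 : ℝ) : ℂ) := by
      intro i
      rw [← inner_conj_symm x (b i), Complex.conj_mul']
      norm_cast
    rw [Finset.sum_congr rfl (fun i _ => h2 i)] at h0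
    rw [← Complex.ofReal_inj]
    push_cast
    push_cast at h0
    exact h0
  have hsum1 : ∑ i, ‖c i‖ ^ 2 = 1 := by simpa [hψ] using hpar ψ
  -- the vector w = (T - Eev) ψ
  set w : V := T ψ - (Eev : ℂ) • ψ with hw
  have hbiT : ∀ i, (inner ℂ (b i) (T ψ) : ℂ) = ((μ i : ℝ) : ℂ) * c i := by
    intro i
    have h1 := hT.eigenvectorBasis_apply_self_apply hn ψ i
    rw [OrthonormalBasis.repr_apply_apply, OrthonormalBasis.repr_apply_apply]
      at h1
    exact h1
  have hcb : ∀ i, (inner ℂ (b i) w : ℂ) = ((μ i - Eev : ℝ) : ℂ) * c i := by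
    intro i
    rw [hw, inner_sub_right, inner_smul_right, hbiT i]
    have hci : c i = inner ℂ (b i) ψ := rfl
    rw [← hci]
    push_cast
    ring
  have hwnorm : ‖w‖ ^ 2 = R ^ 2 + (Eψ - Eev) ^ 2 := by
    have hTψψ : (inner ℂ (T ψ) ψ : ℂ) = (Eψ : ℂ) := by rw [hT ψ ψ, hE]
    have hTT : (inner ℂ (T ψ) (T ψ) : ℂ) = ((R ^ 2 + Eψ ^ 2 : ℝ) : ℂ) := by
      rw [hT ψ (T ψ)]; exact hR
    have hψψ : (inner ℂ ψ ψ : ℂ) = 1 := by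
      rw [inner_self_eq_norm_sq_to_K, hψ]; norm_num
    have h0 : (inner ℂ w w : ℂ) = ((R ^ 2 + (Eψ - Eev) ^ 2 : ℝ) : ℂ) := by
      rw [hw, inner_sub_sub_self, inner_smul_left, inner_smul_right,
        inner_smul_right, inner_smul_left, hTT, hTψψ, hE, hψψ,
        Complex.conj_ofReal]
      push_cast
      ring
    have h1 := inner_self_eq_norm_sq_to_K (𝕜 := ℂ) w
    rw [h0] at h1
    rw [← Complex.ofReal_inj]
    push_cast
    push_cast at h1
    exact h1.symm
  have hsum2 : ∑ i, (μ i - Eev) ^ 2 * ‖c i‖ ^ 2 = R ^ 2 + (Eψ - Eev) ^ 2 := by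
    rw [← hwnorm, ← hpar w]
    refine Finset.sum_congr rfl fun i _ => ?_
    rw [hcb i, norm_mul, mul_pow, Complex.norm_real, Real.norm_eq_abs, sq_abs]
  -- the set of indices with eigenvalue Eev
  set A : Finset (Fin n) := Finset.univ.filter (fun i => μ i = Eev) with hA
  have hbi_span : ∀ i ∈ A, ∃ a : ℂ, ‖a‖ = 1 ∧ b i = a • Ψ := by
    intro i hi
    have hμi : μ i = Eev := by simpa [hA] using hi
    have hmem : b i ∈ (ℂ ∙ Ψ) := by
      rw [hspan]
      refine Module.End.mem_eigenspace_iff.mpr ?_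
      rw [hT.apply_eigenvectorBasis hn i, ← hμ, ← hb, hμi]
      rfl
    obtain ⟨a, ha⟩ := Submodule.mem_span_singleton.mp hmem
    refine ⟨a, ?_, ha.symm⟩
    have : ‖b i‖ = 1 := b.orthonormal.1 i
    rw [← ha, norm_smul, hΨ, mul_one] at this
    exact this
  have hA_term : ∀ i ∈ A, ‖c i‖ ^ 2 = ‖(inner ℂ Ψ ψ : ℂ)‖ ^ 2 := by
    intro i hi
    obtain ⟨a, ha1, ha2⟩ := hbi_span i hi
    have hci : c i = inner ℂ (b i) ψ := rfl
    rw [hci, ha2, inner_smul_left, norm_mul, RCLike.norm_conj, ha1, one_mul]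
  have hA_card : A.card ≤ 1 := by
    rw [Finset.card_le_one]
    intro i hi j hj
    by_contra hij
    obtain ⟨a, ha1, ha2⟩ := hbi_span i hi
    obtain ⟨a', ha1', ha2'⟩ := hbi_span j hj
    have h0 : (inner ℂ (b i) (b j) : ℂ) = 0 := b.orthonormal.2 hij
    have hΨΨ : (inner ℂ Ψ Ψ : ℂ) = 1 := by
      rw [inner_self_eq_norm_sq_to_K, hΨ]; norm_num
    rw [ha2, ha2', inner_smul_left, inner_smul_right, hΨΨ, mul_one] at h0
    rcases mul_eq_zero.mp h0 with h | h
    · rw [map_eq_zero] at h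
      rw [h, norm_zero] at ha1; norm_num at ha1
    · rw [h, norm_zero] at ha1'; norm_num at ha1'
  have hA_sum : ∑ i ∈ A, ‖c i‖ ^ 2 ≤ ‖(inner ℂ Ψ ψ : ℂ)‖ ^ 2 := by
    calc ∑ i ∈ A, ‖c i‖ ^ 2 = ∑ i ∈ A, ‖(inner ℂ Ψ ψ : ℂ)‖ ^ 2 :=
          Finset.sum_congr rfl hA_term
      _ = A.card * ‖(inner ℂ Ψ ψ : ℂ)‖ ^ 2 := by rw [Finset.sum_const]; ring
      _ ≤ 1 * ‖(inner ℂ Ψ ψ : ℂ)‖ ^ 2 := by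
          apply mul_le_mul_of_nonneg_right _ (sq_nonneg _)
          exact_mod_cast hA_card
      _ = ‖(inner ℂ Ψ ψ : ℂ)‖ ^ 2 := one_mul _
  -- bound on the complement
  have hAc_sum : ∑ i ∈ Aᶜ, ‖c i‖ ^ 2 ≤ 2 * R ^ 2 / Δ ^ 2 := by
    rw [le_div_iff₀ (by positivity)]
    calc (∑ i ∈ Aᶜ, ‖c i‖ ^ 2) * Δ ^ 2 = ∑ i ∈ Aᶜ, Δ ^ 2 * ‖c i‖ ^ 2 := by
          rw [Finset.sum_mul]; exact Finset.sum_congr rfl fun i _ => by ring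
      _ ≤ ∑ i ∈ Aᶜ, (μ i - Eev) ^ 2 * ‖c i‖ ^ 2 := by
          refine Finset.sum_le_sum fun i hi => ?_
          apply mul_le_mul_of_nonneg_right _ (sq_nonneg _)
          have hμi : μ i ≠ Eev := by
            simp only [hA, Finset.mem_compl, Finset.mem_filter, Finset.mem_univ,
              true_and] at hi
            exact hi
          have hev : Module.End.HasEigenvalue T ((μ i : ℝ) : ℂ) :=
            hT.hasEigenvalue_eigenvalues hn i
          have h1 := hΔ_gap (μ i) hev hμi
          calc Δ ^ 2 ≤ |μ i - Eev| ^ 2 := by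
                exact pow_le_pow_left₀ hΔ_pos.le h1 2
            _ = (μ i - Eev) ^ 2 := sq_abs _
      _ ≤ ∑ i, (μ i - Eev) ^ 2 * ‖c i‖ ^ 2 := by
          refine Finset.sum_le_sum_of_subset_of_nonneg (Finset.subset_univ _)
            fun i _ _ => by positivity
      _ = R ^ 2 + (Eψ - Eev) ^ 2 := hsum2
      _ ≤ 2 * R ^ 2 := by
          have : (Eψ - Eev) ^ 2 ≤ R ^ 2 := by
            rw [← sq_abs]
            exact pow_le_pow_left₀ (abs_nonneg _) hclose 2
          linarith
  have hsplit : ∑ i ∈ A, ‖c i‖ ^ 2 + ∑ i ∈ Aᶜ, ‖c i‖ ^ 2 = 1 := by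
    rw [Finset.sum_add_sum_compl, hsum1]
  linarith
end

section
/- Let H be self-adjoint, ψ a unit vector with energy 𝓔 and variance R² satisfying R² < Δ²/4, where Δ is a uniform lower bound on the gap between any two distinct eigenvalues of H. Then there exists exactly one eigenvalue E of H in the interval (𝓔 − Δ/2, 𝓔 + Δ/2), and |𝓔 − E| ≤ 2R²/Δ. -/
/-- If `R² < Δ²/4`, where `Δ` lower-bounds the gap between any two distinct
eigenvalues of the self-adjoint operator `T`, then there is exactly one
eigenvalue `E` in `(𝓔 − Δ/2, 𝓔 + Δ/2)`, and it satisfies `|𝓔 − E| ≤ 2R²/Δ`. -/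
theorem unique_eigenvalue_near_energy
    {V : Type*} [NormedAddCommGroup V] [InnerProductSpace ℂ V]
    [FiniteDimensional ℂ V]
    (T : V →ₗ[ℂ] V) (hT : T.IsSymmetric)
    (ψ : V) (hψ : ‖ψ‖ = 1) (Eψ R2 Δ : ℝ)
    (hE : (inner ℂ ψ (T ψ) : ℂ) = (Eψ : ℂ))
    (hR : (inner ℂ ψ (T (T ψ)) : ℂ) = ((R2 + Eψ ^ 2 : ℝ) : ℂ))
    (hΔ_pos : 0 < Δ)
    (hΔ_gap : ∀ lam mu : ℝ, Module.End.HasEigenvalue T (lam : ℂ) →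
      Module.End.HasEigenvalue T (mu : ℂ) → lam ≠ mu → Δ ≤ |lam - mu|)
    (hR2 : R2 < Δ ^ 2 / 4) :
    ∃ Eev : ℝ,
      (Module.End.HasEigenvalue T (Eev : ℂ) ∧
        Eψ - Δ / 2 < Eev ∧ Eev < Eψ + Δ / 2) ∧
      |Eψ - Eev| ≤ 2 * R2 / Δ ∧
      ∀ Eev' : ℝ, Module.End.HasEigenvalue T (Eev' : ℂ) →
        Eψ - Δ / 2 < Eev' → Eev' < Eψ + Δ / 2 → Eev' = Eev := by
  classical
  have hn : Module.finrank ℂ V = Module.finrank ℂ V := rfl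
  set n := Module.finrank ℂ V
  set b := hT.eigenvectorBasis hn with hb
  set lam := hT.eigenvalues hn with hlam
  set c : Fin n → ℂ := fun i => b.repr ψ i with hc
  set p : Fin n → ℝ := fun i => ‖c i‖ ^ 2 with hp
  have hp_nonneg : ∀ i, 0 ≤ p i := fun i => sq_nonneg _
  have hinner : ∀ φ : V, (inner ℂ ψ φ : ℂ) =
      ∑ i, (starRingEnd ℂ) (c i) * b.repr φ i := by
    intro φ
    rw [← b.repr.inner_map_map ψ φ, PiLp.inner_apply]
    refine Finset.sum_congr rfl fun i _ => ?_
    rw [hc, RCLike.inner_apply]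
    ring
  have hcc : ∀ i, (starRingEnd ℂ) (c i) * c i = ((p i : ℝ) : ℂ) := by
    intro i
    rw [mul_comm, Complex.mul_conj, hp]
    simp [Complex.normSq_eq_norm_sq]
  have hTrep : ∀ i, b.repr (T ψ) i = (lam i : ℂ) * c i := by
    intro i
    rw [hc, hlam, hb, hT.eigenvectorBasis_apply_self_apply hn ψ i]
    push_cast
    norm_cast
  have hT2rep : ∀ i, b.repr (T (T ψ)) i = (lam i : ℂ) ^ 2 * c i := by
    intro i
    rw [hc, hlam, hb, hT.eigenvectorBasis_apply_self_apply hn (T ψ) i,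
      hT.eigenvectorBasis_apply_self_apply hn ψ i]
    push_cast
    rw [← mul_assoc, ← sq]
    norm_cast
  -- the three moment identities (complex form)
  have A0 : (∑ i, ((p i : ℝ) : ℂ)) = 1 := by
    have h1 : (inner ℂ ψ ψ : ℂ) = 1 := by
      rw [inner_self_eq_norm_sq_to_K, hψ]; norm_num
    rw [hinner ψ] at h1
    rw [← h1]
    exact Finset.sum_congr rfl fun i _ => (hcc i).symm
  have A1 : (∑ i, ((p i : ℝ) : ℂ) * (lam i : ℂ)) = (Eψ : ℂ) := by
    rw [← hE, hinner (T ψ)]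
    refine Finset.sum_congr rfl fun i _ => ?_
    rw [hTrep i, ← hcc i]; ring
  have A2 : (∑ i, ((p i : ℝ) : ℂ) * (lam i : ℂ) ^ 2) = ((R2 + Eψ ^ 2 : ℝ) : ℂ) := by
    rw [← hR, hinner (T (T ψ))]
    refine Finset.sum_congr rfl fun i _ => ?_
    rw [hT2rep i, ← hcc i]; ring
  -- real forms
  have P0 : (∑ i, p i) = 1 := by
    have : ((∑ i, p i : ℝ) : ℂ) = ((1 : ℝ) : ℂ) := by push_cast; exact A0
    exact_mod_cast this
  have P1 : (∑ i, p i * lam i) = Eψ := by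
    have : ((∑ i, p i * lam i : ℝ) : ℂ) = ((Eψ : ℝ) : ℂ) := by push_cast; exact A1
    exact_mod_cast this
  have P2 : (∑ i, p i * lam i ^ 2) = R2 + Eψ ^ 2 := by
    have : ((∑ i, p i * lam i ^ 2 : ℝ) : ℂ) = ((R2 + Eψ ^ 2 : ℝ) : ℂ) := by
      push_cast
      push_cast at A2
      exact A2
    exact_mod_cast this
  have S3 : (∑ i, p i * (lam i - Eψ) ^ 2) = R2 := by
    have h := Finset.sum_congr rfl fun i (_ : i ∈ Finset.univ) =>
      show p i * (lam i - Eψ) ^ 2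
        = p i * lam i ^ 2 - 2 * Eψ * (p i * lam i) + Eψ ^ 2 * p i by ring
    rw [h, Finset.sum_add_distrib, Finset.sum_sub_distrib, ← Finset.mul_sum,
      ← Finset.mul_sum, P0, P1, P2]
    ring
  -- existence of a good index
  have hex : ∃ i, p i ≠ 0 ∧ (lam i - Eψ) ^ 2 ≤ R2 := by
    by_contra hcon
    push_neg at hcon
    have hj : ∃ j, p j ≠ 0 := by
      by_contra hz
      push_neg at hz
      rw [Finset.sum_congr rfl fun i _ => hz i] at P0
      simp at P0
    obtain ⟨j, hj⟩ := hj
    have hlt : R2 < ∑ i, p i * (lam i - Eψ) ^ 2 := by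
      calc R2 = ∑ i, p i * R2 := by rw [← Finset.sum_mul, P0, one_mul]
        _ < ∑ i, p i * (lam i - Eψ) ^ 2 := by
          refine Finset.sum_lt_sum (fun i _ => ?_) ⟨j, Finset.mem_univ j, ?_⟩
          · by_cases hpi : p i = 0
            · simp [hpi]
            · exact mul_le_mul_of_nonneg_left (le_of_lt (hcon i hpi)) (hp_nonneg i)
          · exact mul_lt_mul_of_pos_left (hcon j hj) (lt_of_le_of_ne (hp_nonneg j) (Ne.symm hj))
    rw [S3] at hlt
    exact lt_irrefl _ hlt
  obtain ⟨i₀, hpi₀, hδ2⟩ := hex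
  set E := lam i₀ with hEdef
  have hEeig : Module.End.HasEigenvalue T ((E : ℝ) : ℂ) :=
    hT.hasEigenvalue_eigenvalues hn i₀
  have hlam_eig : ∀ i, Module.End.HasEigenvalue T ((lam i : ℝ) : ℂ) := fun i =>
    hT.hasEigenvalue_eigenvalues hn i
  set δ := Eψ - E with hδdef
  have hδsq : δ ^ 2 ≤ R2 := by rw [hδdef]; nlinarith [hδ2]
  have hδabs : |δ| < Δ / 2 := by nlinarith [sq_abs δ, abs_nonneg δ]
  -- the second moment about E
  have S4 : (∑ i, p i * (lam i - E) ^ 2) = R2 + δ ^ 2 := by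
    have h := Finset.sum_congr rfl fun i (_ : i ∈ Finset.univ) =>
      show p i * (lam i - E) ^ 2
        = p i * lam i ^ 2 - 2 * E * (p i * lam i) + E ^ 2 * p i by ring
    rw [h, Finset.sum_add_distrib, Finset.sum_sub_distrib, ← Finset.mul_sum,
      ← Finset.mul_sum, P0, P1, P2, hδdef]
    ring
  have S5 : (∑ i, p i * (lam i - E)) = δ := by
    have h := Finset.sum_congr rfl fun i (_ : i ∈ Finset.univ) =>
      show p i * (lam i - E) = p i * lam i - E * p i by ring
    rw [h, Finset.sum_sub_distrib, ← Finset.mul_sum, P0, P1, hδdef]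
    ring
  -- per-term gap bound
  have hterm : ∀ i, Δ * (p i * |lam i - E|) ≤ p i * (lam i - E) ^ 2 := by
    intro i
    by_cases hne : lam i = E
    · simp [hne]
    · have hgap := hΔ_gap (lam i) E (hlam_eig i) hEeig hne
      have h1 : Δ * |lam i - E| ≤ |lam i - E| * |lam i - E| :=
        mul_le_mul_of_nonneg_right hgap (abs_nonneg _)
      have h2 := mul_le_mul_of_nonneg_left h1 (hp_nonneg i)
      nlinarith [sq_abs (lam i - E), hp_nonneg i]
  have hsum : Δ * (∑ i, p i * |lam i - E|) ≤ R2 + δ ^ 2 := by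
    rw [← S4, Finset.mul_sum]
    exact Finset.sum_le_sum fun i _ => hterm i
  have habs : |δ| ≤ ∑ i, p i * |lam i - E| := by
    rw [← S5]
    calc |∑ i, p i * (lam i - E)| ≤ ∑ i, |p i * (lam i - E)| :=
          Finset.abs_sum_le_sum_abs _ _
      _ = ∑ i, p i * |lam i - E| := Finset.sum_congr rfl fun i _ => by
          rw [abs_mul, abs_of_nonneg (hp_nonneg i)]
  have hbound : |δ| ≤ 2 * R2 / Δ := by
    rw [le_div_iff₀ hΔ_pos]
    nlinarith [hsum, habs, hδsq]
  have hδlt := abs_lt.mp hδabs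
  refine ⟨E, ⟨hEeig, by rw [hδdef] at hδlt; constructor <;> linarith [hδlt.1, hδlt.2]⟩,
    hbound, ?_⟩
  intro E' hE'eig h1 h2
  by_contra hne
  have hgap := hΔ_gap E' E hE'eig hEeig hne
  have hlt : |E' - E| < Δ := by
    rw [abs_lt]
    rw [hδdef] at hδlt
    constructor <;> linarith [hδlt.1, hδlt.2]
  linarith
end

section
/- PQE energy error bound: Let H be Hermitian with lowest eigenvalue E_gs isolated from the rest of the spectrum, and E_es the second-lowest spectral point. Let {Φ_ν} be an orthonormal basis, E = ⟨Φ₀, HΦ₀⟩, and r_ν = ⟨Φ_ν, HΦ₀⟩ for ν ≥ 1. If E < E_es, then E − (Σ_{ν≥1}|r_ν|²)/(E_es − E) ≤ E_gs ≤ E. -/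
/-- PQE energy error bound: with `Egs` the lowest eigenvalue, `Ees` the
second-lowest spectral point, and residues `r_ν = ⟨Φ_ν, T Φ₀⟩`, if the energy
`E = ⟨Φ₀, T Φ₀⟩` satisfies `E < Ees`, then
`E − (Σ_{ν≥1}|r_ν|²)/(Ees − E) ≤ Egs ≤ E`. -/
theorem pqe_energy_error_bound
    {V : Type*} [NormedAddCommGroup V] [InnerProductSpace ℂ V]
    [FiniteDimensional ℂ V] {d : ℕ}
    (T : V →ₗ[ℂ] V) (hT : T.IsSymmetric)
    (Egs Ees : ℝ)
    (hgs_eig : Module.End.HasEigenvalue T (Egs : ℂ))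
    (hgs_min : ∀ μ : ℝ, Module.End.HasEigenvalue T (μ : ℂ) → Egs ≤ μ)
    (hes_eig : Module.End.HasEigenvalue T (Ees : ℂ))
    (hgs_lt_es : Egs < Ees)
    (hes_second : ∀ μ : ℝ, Module.End.HasEigenvalue T (μ : ℂ) → μ ≠ Egs → Ees ≤ μ)
    (Φ : OrthonormalBasis (Fin (d + 1)) ℂ V)
    (Eψ : ℝ)
    (hE : (inner ℂ (Φ 0) (T (Φ 0)) : ℂ) = (Eψ : ℂ))
    (hlt : Eψ < Ees) :
    Eψ - (∑ ν ∈ Finset.univ.erase 0, ‖(inner ℂ (Φ ν) (T (Φ 0)) : ℂ)‖ ^ 2)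
        / (Ees - Eψ) ≤ Egs ∧ Egs ≤ Eψ := by
  classical
  have hn : Module.finrank ℂ V = d + 1 := by
    rw [Module.finrank_eq_card_basis Φ.toBasis, Fintype.card_fin]
  set ψ := Φ 0 with hψ
  set b := hT.eigenvectorBasis hn with hb
  set μ := hT.eigenvalues hn with hμ
  set p : Fin (d + 1) → ℝ := fun i => ‖(inner ℂ (b i) ψ : ℂ)‖ ^ 2 with hp
  have hp0 : ∀ i, 0 ≤ p i := fun i => sq_nonneg _
  -- eigenvalue facts
  have hmin : ∀ i, Egs ≤ μ i := fun i =>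
    hgs_min _ (hT.hasEigenvalue_eigenvalues hn i)
  have hsec : ∀ i, μ i = Egs ∨ Ees ≤ μ i := by
    intro i
    by_cases h : μ i = Egs
    · exact Or.inl h
    · exact Or.inr (hes_second _ (hT.hasEigenvalue_eigenvalues hn i) h)
  -- inner products in eigenbasis
  have hbT : ∀ i, (inner ℂ (b i) (T ψ) : ℂ) = (μ i : ℂ) * inner ℂ (b i) ψ := by
    intro i
    rw [← hT (b i) ψ, LinearMap.IsSymmetric.apply_eigenvectorBasis, inner_smul_left]
    simp
    rfl
  have hconj : ∀ (x y : V),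
      (inner ℂ x y : ℂ) * inner ℂ y x = ((‖(inner ℂ y x : ℂ)‖ ^ 2 : ℝ) : ℂ) := by
    intro x y
    rw [← inner_conj_symm x y, Complex.conj_mul']
    norm_cast
  -- Parseval-type identities
  have hsum1 : ∑ i, p i = 1 := by
    have h := b.sum_inner_mul_inner ψ ψ
    have hψ1 : (inner ℂ ψ ψ : ℂ) = 1 := by
      rw [inner_self_eq_norm_sq_to_K]
      simp [hψ, Φ.orthonormal.1 0]
    rw [hψ1] at h
    have : ((∑ i, p i : ℝ) : ℂ) = 1 := by
      rw [← h, Complex.ofReal_sum]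
      exact Finset.sum_congr rfl fun i _ => (hconj ψ (b i)).symm
    exact_mod_cast this
  have hsumE : ∑ i, μ i * p i = Eψ := by
    have h := b.sum_inner_mul_inner ψ (T ψ)
    rw [hE] at h
    have : ((∑ i, μ i * p i : ℝ) : ℂ) = (Eψ : ℂ) := by
      rw [← h, Complex.ofReal_sum]
      refine Finset.sum_congr rfl fun i _ => ?_
      rw [hbT i, ← mul_assoc, mul_comm (inner ℂ ψ (b i) : ℂ) ((μ i : ℂ)), mul_assoc,
        hconj ψ (b i)]
      norm_cast
    exact_mod_cast this
  have hsumSq : ∑ i, μ i ^ 2 * p i = ‖T ψ‖ ^ 2 := by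
    have h := b.sum_inner_mul_inner (T ψ) (T ψ)
    have hTT : (inner ℂ (T ψ) (T ψ) : ℂ) = ((‖T ψ‖ ^ 2 : ℝ) : ℂ) := by
      rw [inner_self_eq_norm_sq_to_K]
      norm_num
    rw [hTT] at h
    have : ((∑ i, μ i ^ 2 * p i : ℝ) : ℂ) = ((‖T ψ‖ ^ 2 : ℝ) : ℂ) := by
      rw [← h, Complex.ofReal_sum]
      refine Finset.sum_congr rfl fun i _ => ?_
      have hnorm : ‖(inner ℂ (b i) (T ψ) : ℂ)‖ ^ 2 = μ i ^ 2 * p i := by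
        rw [hbT i, norm_mul, mul_pow]
        simp [hp, Complex.norm_real, sq_abs]
      rw [hconj (T ψ) (b i), hnorm]
    exact_mod_cast this
  -- Parseval in the Φ basis
  set S : ℝ := ∑ ν ∈ Finset.univ.erase 0, ‖(inner ℂ (Φ ν) (T ψ) : ℂ)‖ ^ 2 with hS
  have hS0 : 0 ≤ S := Finset.sum_nonneg fun _ _ => sq_nonneg _
  have hTψ : ‖T ψ‖ ^ 2 = Eψ ^ 2 + S := by
    have h := Φ.sum_inner_mul_inner (T ψ) (T ψ)
    have hTT : (inner ℂ (T ψ) (T ψ) : ℂ) = ((‖T ψ‖ ^ 2 : ℝ) : ℂ) := by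
      rw [inner_self_eq_norm_sq_to_K]
      norm_num
    rw [hTT] at h
    have h2 : ((∑ ν, ‖(inner ℂ (Φ ν) (T ψ) : ℂ)‖ ^ 2 : ℝ) : ℂ) = ((‖T ψ‖ ^ 2 : ℝ) : ℂ) := by
      rw [← h, Complex.ofReal_sum]
      exact Finset.sum_congr rfl fun ν _ => (hconj (T ψ) (Φ ν)).symm
    have h3 : ∑ ν, ‖(inner ℂ (Φ ν) (T ψ) : ℂ)‖ ^ 2 = ‖T ψ‖ ^ 2 := by exact_mod_cast h2
    rw [← h3, ← Finset.add_sum_erase _ _ (Finset.mem_univ 0), ← hψ, hE]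
    simp [Complex.norm_real, sq_abs, hS, hψ]
  -- key positivity
  have hkey : 0 ≤ ∑ i, (μ i - Egs) * (μ i - Ees) * p i := by
    refine Finset.sum_nonneg fun i _ => ?_
    rcases hsec i with h | h
    · rw [h]; ring_nf; simp
    · have h1 : 0 ≤ μ i - Egs := by linarith [hmin i]
      have h2 : 0 ≤ μ i - Ees := by linarith
      positivity
  have hexp : ∑ i, (μ i - Egs) * (μ i - Ees) * p i
      = (∑ i, μ i ^ 2 * p i) - (Egs + Ees) * (∑ i, μ i * p i)
        + Egs * Ees * (∑ i, p i) := by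
    rw [Finset.mul_sum, Finset.mul_sum, ← Finset.sum_sub_distrib, ← Finset.sum_add_distrib]
    exact Finset.sum_congr rfl fun i _ => by ring
  rw [hexp, hsumSq, hsumE, hsum1, hTψ] at hkey
  -- variational bound Egs ≤ Eψ
  have hvar : Egs ≤ Eψ := by
    have : Egs * 1 ≤ ∑ i, μ i * p i := by
      rw [← hsum1, Finset.mul_sum]
      exact Finset.sum_le_sum fun i _ => mul_le_mul_of_nonneg_right (hmin i) (hp0 i)
    rw [hsumE] at this
    linarith
  refine ⟨?_, hvar⟩
  have hpos : 0 < Ees - Eψ := by linarith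
  have : Eψ - Egs ≤ S / (Ees - Eψ) := by
    rw [le_div_iff₀ hpos]
    nlinarith
  linarith
end

section
/- Newton–Kantorovich theorem (modified Newton iteration): Let F : ℝᴺ → ℝᴺ be Fréchet-differentiable on the closed ball B(t₀, R) with Jacobian J, J(t₀) invertible, ‖J(t₀)⁻¹ F(t₀)‖ ≤ η, ‖J(t₀)⁻¹ J(t) − I‖ ≤ L‖t − t₀‖ for all t ∈ B(t₀, R), ηL < 1/2, and (1 − √(1 − 2Lη))/L ≤ R. Then the sequence t⁽ⁿ⁺¹⁾ = t⁽ⁿ⁾ − J(t₀)⁻¹F(t⁽ⁿ⁾) with t⁽⁰⁾ = t₀ converges to a root t* of F in B(t₀, R), and t* is the unique root in B(t₀, (1 − √(1 − 2Lη))/L). -/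
open Metric Filter Set

/-- Scalar majorant sequence for the modified Newton iteration. -/
noncomputable def nkS (η L : ℝ) : ℕ → ℝ
  | 0 => 0
  | n + 1 => L / 2 * nkS η L n ^ 2 + η

set_option maxHeartbeats 2000000 in
/-- Newton–Kantorovich theorem for the modified Newton iteration. -/
theorem newton_kantorovich_modified
    {X : Type*} [NormedAddCommGroup X] [NormedSpace ℝ X]
    [FiniteDimensional ℝ X]
    (N : ℕ) (hN : Module.finrank ℝ X = N)
    (F : X → X) (J : X → X →L[ℝ] X)
    (t₀ : X) (R η L : ℝ) (hR : 0 < R) (hη : 0 < η) (hL : 0 < L)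
    (A : X ≃L[ℝ] X) (hA : (A : X →L[ℝ] X) = J t₀)
    (hF : ∀ t ∈ Metric.closedBall t₀ R, HasFDerivAt F (J t) t)
    (hstep : ‖(A.symm : X →L[ℝ] X) (F t₀)‖ ≤ η)
    (hLip : ∀ t ∈ Metric.closedBall t₀ R,
      ‖(A.symm : X →L[ℝ] X).comp (J t) - ContinuousLinearMap.id ℝ X‖ ≤
        L * ‖t - t₀‖)
    (hηL : η * L < 1 / 2)
    (hRbig : (1 - Real.sqrt (1 - 2 * L * η)) / L ≤ R)
    (seq : ℕ → X) (hseq0 : seq 0 = t₀)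
    (hseq : ∀ n, seq (n + 1) = seq n - (A.symm : X →L[ℝ] X) (F (seq n))) :
    ∃ tstar ∈ Metric.closedBall t₀ R,
      Filter.Tendsto seq Filter.atTop (nhds tstar) ∧ F tstar = 0 ∧
      ∀ s ∈ Metric.closedBall t₀ ((1 - Real.sqrt (1 - 2 * L * η)) / L),
        F s = 0 → s = tstar := by
  set σ : ℝ := Real.sqrt (1 - 2 * L * η) with hσdef
  have h2Lηpos : 0 < 1 - 2 * L * η := by nlinarith
  have hσpos : 0 < σ := Real.sqrt_pos.mpr h2Lηpos
  have hσ2 : σ ^ 2 = 1 - 2 * L * η := Real.sq_sqrt h2Lηpos.le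
  have hσlt1 : σ < 1 := by nlinarith
  set r : ℝ := (1 - σ) / L with hrdef
  clear_value σ
  have hrpos : 0 < r := div_pos (by linarith) hL
  have hrR : r ≤ R := hRbig
  -- the scalar fixed point equation
  have hfix : L / 2 * r ^ 2 + η = r := by
    rw [hrdef]
    field_simp
    nlinarith [hσ2]
  clear_value r
  set s := nkS η L with hsdef
  have hs0 : s 0 = 0 := rfl
  have hsrec : ∀ n, s (n + 1) = L / 2 * s n ^ 2 + η := fun n => rfl
  clear_value s
  have hsle : ∀ n, 0 ≤ s n ∧ s n ≤ r := by
    intro n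
    induction n with
    | zero =>
      rw [hs0]
      exact ⟨le_rfl, hrpos.le⟩
    | succ n ih =>
      refine ⟨?_, ?_⟩
      · rw [hsrec]; nlinarith [ih.1]
      · rw [hsrec]
        nlinarith [ih.1, ih.2, hfix, mul_nonneg (mul_nonneg hL.le (sub_nonneg.mpr ih.2)) (by linarith [ih.1, hrpos.le] : (0:ℝ) ≤ r + s n)]
  have hsmono : ∀ n, s n ≤ s (n + 1) := by
    intro n
    rw [hsrec]
    obtain ⟨h0, h1⟩ := hsle n
    have hls : L * s n ≤ 1 - σ := by
      rw [hrdef, le_div_iff₀ hL] at h1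
      linarith
    have h2a : 0 ≤ 1 - σ - L * s n := by linarith
    have h2b : 0 ≤ 1 + σ - L * s n := by linarith
    have h2 : 0 ≤ (1 - σ - L * s n) * (1 + σ - L * s n) := mul_nonneg h2a h2b
    have h3 : (1 - σ - L * s n) * (1 + σ - L * s n) =
        L * (L * s n ^ 2 - 2 * s n + 2 * η) := by linear_combination -hσ2
    rw [h3] at h2
    have h4 : 0 ≤ L * s n ^ 2 - 2 * s n + 2 * η := (mul_nonneg_iff_of_pos_left hL).mp h2
    linarith
  -- the modified Newton map
  set G : X → X := fun x => x - (A.symm : X →L[ℝ] X) (F x) with hGdef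
  clear_value G
  have hseqG : ∀ n, seq (n + 1) = G (seq n) := by
    intro n; rw [hGdef]; exact hseq n
  have hGder : ∀ x ∈ Metric.closedBall t₀ R, HasFDerivAt G
      (ContinuousLinearMap.id ℝ X - (A.symm : X →L[ℝ] X).comp (J x)) x := by
    intro x hx
    rw [hGdef]
    exact (hasFDerivAt_id x).sub
      (((A.symm : X →L[ℝ] X).hasFDerivAt).comp x (hF x hx))
  have hGbound : ∀ x ∈ Metric.closedBall t₀ R,
      ‖ContinuousLinearMap.id ℝ X - (A.symm : X →L[ℝ] X).comp (J x)‖ ≤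
        L * ‖x - t₀‖ := by
    intro x hx
    rw [← norm_neg, neg_sub]
    exact hLip x hx
  -- Key estimate via the mean value inequality with linear bound
  have key : ∀ u t : X, ∀ a b : ℝ, u ∈ Metric.closedBall t₀ R →
      t ∈ Metric.closedBall t₀ R → ‖u - t₀‖ ≤ a → ‖t - t₀‖ ≤ b →
      ‖G t - G u‖ ≤ L / 2 * (a + b) * ‖t - u‖ := by
    intro u t a b hu ht hua htb
    set K := ‖t - u‖ with hKdef
    have hK : 0 ≤ K := norm_nonneg _
    have ha0 : 0 ≤ a := le_trans (norm_nonneg _) hua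
    have hb0 : 0 ≤ b := le_trans (norm_nonneg _) htb
    set γ : ℝ → X := fun τ => u + τ • (t - u) with hγdef
    have hγcomb : ∀ τ : ℝ, γ τ = (1 - τ) • u + τ • t := by
      intro τ
      rw [hγdef]
      simp only [smul_sub, sub_smul, one_smul]
      abel
    have hγmem : ∀ τ ∈ Set.Icc (0 : ℝ) 1, γ τ ∈ Metric.closedBall t₀ R := by
      intro τ hτ
      rw [hγcomb]
      exact (convex_closedBall t₀ R) hu ht (by linarith [hτ.2]) hτ.1 (by ring)
    have hγdist : ∀ τ ∈ Set.Icc (0 : ℝ) 1,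
        ‖γ τ - t₀‖ ≤ (1 - τ) * a + τ * b := by
      intro τ hτ
      have : γ τ - t₀ = (1 - τ) • (u - t₀) + τ • (t - t₀) := by
        rw [hγcomb]
        simp only [smul_sub, sub_smul, one_smul]
        abel
      rw [this]
      calc ‖(1 - τ) • (u - t₀) + τ • (t - t₀)‖
          ≤ ‖(1 - τ) • (u - t₀)‖ + ‖τ • (t - t₀)‖ := norm_add_le _ _
        _ = (1 - τ) * ‖u - t₀‖ + τ * ‖t - t₀‖ := by
            rw [norm_smul, norm_smul, Real.norm_eq_abs, Real.norm_eq_abs,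
              abs_of_nonneg (by linarith [hτ.2]), abs_of_nonneg hτ.1]
        _ ≤ (1 - τ) * a + τ * b := by
            apply add_le_add
            · exact mul_le_mul_of_nonneg_left hua (by linarith [hτ.2])
            · exact mul_le_mul_of_nonneg_left htb hτ.1
    have hγder : ∀ τ : ℝ, HasDerivAt γ (t - u) τ := by
      intro τ
      have : HasDerivAt (fun τ : ℝ => τ • (t - u)) ((1 : ℝ) • (t - u)) τ :=
        (hasDerivAt_id τ).smul_const (t - u)
      have h2 := this.const_add u
      rw [one_smul] at h2
      exact h2
    set g : ℝ → X := fun τ => G (γ τ) - G u with hgdef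
    have hgder : ∀ τ ∈ Set.Icc (0 : ℝ) 1, HasDerivAt g
        ((ContinuousLinearMap.id ℝ X - (A.symm : X →L[ℝ] X).comp (J (γ τ)))
          (t - u)) τ := by
      intro τ hτ
      exact (((hGder (γ τ) (hγmem τ hτ)).comp_hasDerivAt τ (hγder τ)).sub_const (G u))
    set B : ℝ → ℝ := fun τ => L * K * (a * τ + (b - a) * τ ^ 2 / 2) with hBdef
    have hBder : ∀ τ : ℝ, HasDerivAt B (L * K * (a + (b - a) * τ)) τ := by
      intro τ
      have h1 : HasDerivAt (fun τ : ℝ => a * τ + (b - a) * τ ^ 2 / 2)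
          (a + (b - a) * τ) τ := by
        have ha' : HasDerivAt (fun τ : ℝ => a * τ) a τ := by
          simpa using (hasDerivAt_id τ).const_mul a
        have hb' : HasDerivAt (fun τ : ℝ => (b - a) * τ ^ 2 / 2)
            ((b - a) * τ) τ := by
          have := ((hasDerivAt_pow 2 τ).const_mul (b - a)).div_const 2
          refine this.congr_deriv ?_
          norm_num
          ring
        exact ha'.add hb'
      simpa using h1.const_mul (L * K)
    have hbound : ∀ τ ∈ Set.Ico (0 : ℝ) 1,
        ‖(ContinuousLinearMap.id ℝ X - (A.symm : X →L[ℝ] X).comp (J (γ τ)))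
          (t - u)‖ ≤ L * K * (a + (b - a) * τ) := by
      intro τ hτ
      have hτ' : τ ∈ Set.Icc (0 : ℝ) 1 := ⟨hτ.1, hτ.2.le⟩
      calc ‖(ContinuousLinearMap.id ℝ X - (A.symm : X →L[ℝ] X).comp (J (γ τ)))
            (t - u)‖
          ≤ ‖ContinuousLinearMap.id ℝ X -
              (A.symm : X →L[ℝ] X).comp (J (γ τ))‖ * K :=
            (ContinuousLinearMap.le_opNorm _ _)
        _ ≤ (L * ‖γ τ - t₀‖) * K :=
            mul_le_mul_of_nonneg_right (hGbound (γ τ) (hγmem τ hτ')) hK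
        _ ≤ (L * ((1 - τ) * a + τ * b)) * K := by
            apply mul_le_mul_of_nonneg_right _ hK
            exact mul_le_mul_of_nonneg_left (hγdist τ hτ') hL.le
        _ = L * K * (a + (b - a) * τ) := by ring
    have hmain := image_norm_le_of_norm_deriv_right_le_deriv_boundary
      (f := g)
      (fun τ hτ => ((hgder τ hτ).continuousAt).continuousWithinAt)
      (fun τ hτ => (hgder τ ⟨hτ.1, hτ.2.le⟩).hasDerivWithinAt)
      (by
        have : g 0 = 0 := by
          simp [hgdef, hγdef]
        rw [this, hBdef]
        simp)
      hBder hbound (Set.right_mem_Icc.mpr zero_le_one)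
    have hg1 : g 1 = G t - G u := by
      have : γ 1 = t := by rw [hγdef]; simp
      rw [hgdef]
      simp only [this]
    have hB1 : B 1 = L / 2 * (a + b) * K := by rw [hBdef]; ring
    rw [hg1, hB1] at hmain
    exact hmain
  -- the invariant: the scalar sequence majorizes the Newton sequence
  have inv : ∀ n, ‖seq n - t₀‖ ≤ s n ∧
      ‖seq (n + 1) - seq n‖ ≤ s (n + 1) - s n := by
    intro n
    induction n with
    | zero =>
      constructor
      · simp [hseq0, hs0]
      · have h1 : seq 1 - seq 0 = -((A.symm : X →L[ℝ] X) (F t₀)) := by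
          rw [hseq 0, hseq0]; abel
        rw [h1, norm_neg]
        have : s 1 - s 0 = η := by rw [hsrec 0, hs0]; ring
        rw [this]
        exact hstep
    | succ n ih =>
      obtain ⟨h1, h2⟩ := ih
      have h3 : ‖seq (n + 1) - t₀‖ ≤ s (n + 1) := by
        calc ‖seq (n + 1) - t₀‖ = ‖(seq (n + 1) - seq n) + (seq n - t₀)‖ := by
              congr 1; abel
          _ ≤ ‖seq (n + 1) - seq n‖ + ‖seq n - t₀‖ := norm_add_le _ _
          _ ≤ (s (n + 1) - s n) + s n := add_le_add h2 h1
          _ = s (n + 1) := by ring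
      refine ⟨h3, ?_⟩
      have humem : seq n ∈ Metric.closedBall t₀ R := by
        rw [Metric.mem_closedBall, dist_eq_norm]
        exact h1.trans ((hsle n).2.trans hrR)
      have htmem : seq (n + 1) ∈ Metric.closedBall t₀ R := by
        rw [Metric.mem_closedBall, dist_eq_norm]
        exact h3.trans ((hsle (n + 1)).2.trans hrR)
      have hk := key (seq n) (seq (n + 1)) (s n) (s (n + 1)) humem htmem h1 h3
      have hGn : seq (n + 1) = G (seq n) := hseqG n
      have hGn1 : seq (n + 2) = G (seq (n + 1)) := hseqG (n + 1)
      calc ‖seq (n + 2) - seq (n + 1)‖ = ‖G (seq (n + 1)) - G (seq n)‖ := by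
            rw [hGn1]; nth_rewrite 2 [hGn]; rfl
        _ ≤ L / 2 * (s n + s (n + 1)) * ‖seq (n + 1) - seq n‖ := hk
        _ ≤ L / 2 * (s n + s (n + 1)) * (s (n + 1) - s n) := by
            apply mul_le_mul_of_nonneg_left h2
            have := (hsle n).1
            have := (hsle (n + 1)).1
            positivity
        _ = s (n + 2) - s (n + 1) := by rw [hsrec (n + 1), hsrec n]; ring
  -- telescoping
  have tele : ∀ n k, ‖seq (n + k) - seq n‖ ≤ s (n + k) - s n := by
    intro n k
    induction k with
    | zero => simp
    | succ k ih =>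
      calc ‖seq (n + (k + 1)) - seq n‖
          = ‖(seq (n + k + 1) - seq (n + k)) + (seq (n + k) - seq n)‖ := by
            rw [show n + (k + 1) = n + k + 1 from rfl]; congr 1; abel
        _ ≤ ‖seq (n + k + 1) - seq (n + k)‖ + ‖seq (n + k) - seq n‖ :=
            norm_add_le _ _
        _ ≤ (s (n + k + 1) - s (n + k)) + (s (n + k) - s n) :=
            add_le_add (inv (n + k)).2 ih
        _ = s (n + (k + 1)) - s n := by rw [show n + (k + 1) = n + k + 1 from rfl]; ring
  -- convergence of the scalar sequence
  have hmonoS : Monotone s := monotone_nat_of_le_succ hsmono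
  have hbdd : BddAbove (Set.range s) := ⟨r, by rintro _ ⟨n, rfl⟩; exact (hsle n).2⟩
  set ℓ : ℝ := ⨆ n, s n with hℓdef
  have hstend : Tendsto s atTop (nhds ℓ) := tendsto_atTop_ciSup hmonoS hbdd
  have hsℓ : ∀ n, s n ≤ ℓ := fun n => le_ciSup hbdd n
  have hℓr : ℓ ≤ r := ciSup_le fun n => (hsle n).2
  -- seq is Cauchy
  have hcau : CauchySeq seq := by
    apply cauchySeq_of_le_tendsto_0 (fun N => ℓ - s N)
    · intro n m N hn hm
      have hgen : ∀ i j : ℕ, i ≤ j → dist (seq i) (seq j) ≤ ℓ - s i := by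
        intro i j hij
        obtain ⟨k, rfl⟩ := le_iff_exists_add.mp hij
        rw [dist_eq_norm, norm_sub_rev]
        calc ‖seq (i + k) - seq i‖ ≤ s (i + k) - s i := tele i k
          _ ≤ ℓ - s i := by linarith [hsℓ (i + k)]
      rcases le_total n m with h | h
      · calc dist (seq n) (seq m) ≤ ℓ - s n := hgen n m h
          _ ≤ ℓ - s N := by linarith [hmonoS hn]
      · calc dist (seq n) (seq m) = dist (seq m) (seq n) := dist_comm _ _
          _ ≤ ℓ - s m := hgen m n h
          _ ≤ ℓ - s N := by linarith [hmonoS hm]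
    · have : Tendsto (fun N => ℓ - s N) atTop (nhds (ℓ - ℓ)) :=
        tendsto_const_nhds.sub hstend
      simpa using this
  obtain ⟨tstar, htstar⟩ := cauchySeq_tendsto_of_complete hcau
  have hmemr : ∀ n, seq n ∈ Metric.closedBall t₀ r := by
    intro n
    rw [Metric.mem_closedBall, dist_eq_norm]
    exact (inv n).1.trans (hsle n).2
  have htstarr : tstar ∈ Metric.closedBall t₀ r :=
    Metric.isClosed_closedBall.mem_of_tendsto htstar (Filter.Eventually.of_forall hmemr)
  have htstarR : tstar ∈ Metric.closedBall t₀ R :=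
    Metric.closedBall_subset_closedBall hrR htstarr
  -- F tstar = 0
  have hF0 : F tstar = 0 := by
    have h1 : Tendsto (fun n => (A.symm : X →L[ℝ] X) (F (seq n))) atTop
        (nhds ((A.symm : X →L[ℝ] X) (F tstar))) := by
      have hFc : Tendsto (fun n => F (seq n)) atTop (nhds (F tstar)) :=
        ((hF tstar htstarR).continuousAt.tendsto).comp htstar
      exact ((A.symm : X →L[ℝ] X).continuous.tendsto _).comp hFc
    have h2 : Tendsto (fun n => (A.symm : X →L[ℝ] X) (F (seq n))) atTop
        (nhds 0) := by
      have heq : ∀ n, (A.symm : X →L[ℝ] X) (F (seq n)) = seq n - seq (n + 1) := by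
        intro n; rw [hseq n]; abel
      have h3 : Tendsto (fun n => seq n - seq (n + 1)) atTop
          (nhds (tstar - tstar)) :=
        htstar.sub (htstar.comp (tendsto_add_atTop_nat 1))
      rw [sub_self] at h3
      simpa only [heq] using h3
    have h4 : (A.symm : X →L[ℝ] X) (F tstar) = 0 := tendsto_nhds_unique h1 h2
    have h5 : A ((A.symm : X →L[ℝ] X) (F tstar)) = A 0 := by rw [h4]
    simpa using h5
  refine ⟨tstar, htstarR, htstar, hF0, ?_⟩
  -- uniqueness
  intro p hp hFp
  have hpR : p ∈ Metric.closedBall t₀ R :=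
    Metric.closedBall_subset_closedBall hrR hp
  have hGp : G p = p := by rw [hGdef]; simp [hFp]
  have hGt : G tstar = tstar := by rw [hGdef]; simp [hF0]
  have hnt : ‖tstar - t₀‖ ≤ r := by
    rw [← dist_eq_norm]; exact htstarr
  have hnp : ‖p - t₀‖ ≤ r := by
    rw [← dist_eq_norm]; exact hp
  have hk := key tstar p r r htstarR hpR hnt hnp
  rw [hGp, hGt] at hk
  have hq : L / 2 * (r + r) = 1 - σ := by
    rw [hrdef]; field_simp; ring
  rw [hq] at hk
  have hzero : ‖p - tstar‖ = 0 := by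
    nlinarith [norm_nonneg (p - tstar)]
  have := norm_eq_zero.mp hzero
  exact sub_eq_zero.mp this
end

section
/- Under the hypotheses of the Newton–Kantorovich theorem for the modified Newton iteration t⁽ⁿ⁺¹⁾ = t⁽ⁿ⁾ − J(t₀)⁻¹F(t⁽ⁿ⁾), with q = 1 − √(1 − 2ηL), the iterates satisfy ‖t⁽ⁿ⁺¹⁾ − t⁽ⁿ⁾‖ ≤ qⁿ ‖t⁽¹⁾ − t⁽⁰⁾‖ and ‖t⁽ⁿ⁾ − t*‖ ≤ (qⁿ/(1 − q)) η for all n ≥ 0, where t* is the limit of the iteration. -/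
noncomputable def nkr (η L : ℝ) : ℕ → ℝ
  | 0 => 0
  | n + 1 => η + L / 2 * (nkr η L n) ^ 2

theorem nkr_succ (η L : ℝ) (n : ℕ) :
    nkr η L (n + 1) = η + L / 2 * (nkr η L n) ^ 2 := rfl

set_option maxHeartbeats 1000000 in
/-- Convergence estimates for the modified Newton iteration under the
Newton–Kantorovich hypotheses, with rate `q = 1 − √(1 − 2ηL)`. -/
theorem newton_kantorovich_estimates
    {X : Type*} [NormedAddCommGroup X] [NormedSpace ℝ X]
    [FiniteDimensional ℝ X]
    (N : ℕ) (hN : Module.finrank ℝ X = N)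
    (F : X → X) (J : X → X →L[ℝ] X)
    (t₀ : X) (R η L : ℝ) (hR : 0 < R) (hη : 0 < η) (hL : 0 < L)
    (A : X ≃L[ℝ] X) (hA : (A : X →L[ℝ] X) = J t₀)
    (hF : ∀ t ∈ Metric.closedBall t₀ R, HasFDerivAt F (J t) t)
    (hstep : ‖(A.symm : X →L[ℝ] X) (F t₀)‖ ≤ η)
    (hLip : ∀ t ∈ Metric.closedBall t₀ R,
      ‖(A.symm : X →L[ℝ] X).comp (J t) - ContinuousLinearMap.id ℝ X‖ ≤
        L * ‖t - t₀‖)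
    (hηL : η * L < 1 / 2)
    (hRbig : (1 - Real.sqrt (1 - 2 * L * η)) / L ≤ R)
    (seq : ℕ → X) (hseq0 : seq 0 = t₀)
    (hseq : ∀ n, seq (n + 1) = seq n - (A.symm : X →L[ℝ] X) (F (seq n)))
    (tstar : X) (htend : Filter.Tendsto seq Filter.atTop (nhds tstar)) :
    ∀ n : ℕ,
      ‖seq (n + 1) - seq n‖ ≤
        (1 - Real.sqrt (1 - 2 * η * L)) ^ n * ‖seq 1 - seq 0‖ ∧
      ‖seq n - tstar‖ ≤
        (1 - Real.sqrt (1 - 2 * η * L)) ^ n /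
          (1 - (1 - Real.sqrt (1 - 2 * η * L))) * η := by
  set q : ℝ := 1 - Real.sqrt (1 - 2 * η * L) with hqdef
  -- basic facts about q
  have h2ηL0 : (0:ℝ) < 2 * η * L := by positivity
  have h2ηL1 : 2 * η * L < 1 := by linarith
  have hsqpos : 0 < Real.sqrt (1 - 2 * η * L) := Real.sqrt_pos.2 (by linarith)
  have hsqlt : Real.sqrt (1 - 2 * η * L) < 1 := by
    have h := Real.sqrt_lt_sqrt (by linarith : (0:ℝ) ≤ 1 - 2 * η * L)
      (by linarith : 1 - 2 * η * L < 1)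
    simpa using h
  have hq0 : 0 < q := by simp only [hqdef]; linarith
  have hq1 : q < 1 := by simp only [hqdef]; linarith
  have hsq : Real.sqrt (1 - 2 * η * L) ^ 2 = 1 - 2 * η * L :=
    Real.sq_sqrt (by linarith)
  have key : 2 * η * L = 2 * q - q ^ 2 := by
    have h1q : 1 - q = Real.sqrt (1 - 2 * η * L) := by rw [hqdef]; ring
    have h2q : (1 - q) ^ 2 = 1 - 2 * η * L := by rw [h1q]; exact hsq
    nlinarith [h2q]
  have hqLR : q / L ≤ R := by
    have h1 : (1:ℝ) - 2 * L * η = 1 - 2 * η * L := by ring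
    rw [h1] at hRbig; exact hRbig
  have hqLpos : 0 < q / L := by positivity
  -- the iteration map
  set g : X → X := fun t => t - (A.symm : X →L[ℝ] X) (F t) with hgdef
  set G : X → X →L[ℝ] X := fun t =>
    ContinuousLinearMap.id ℝ X - (A.symm : X →L[ℝ] X).comp (J t) with hGdef
  have hg : ∀ t ∈ Metric.closedBall t₀ R, HasFDerivAt g (G t) t := by
    intro t ht
    exact (hasFDerivAt_id t).sub ((A.symm : X →L[ℝ] X).hasFDerivAt.comp t (hF t ht))
  have hGnorm : ∀ t ∈ Metric.closedBall t₀ R, ‖G t‖ ≤ L * ‖t - t₀‖ := by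
    intro t ht
    rw [hGdef]
    simpa [norm_sub_rev] using hLip t ht
  -- quadratic estimate along segments from t₀
  have hquad : ∀ b : X, ‖b - t₀‖ ≤ R → ‖g b - g t₀‖ ≤ L / 2 * ‖b - t₀‖ ^ 2 := by
    intro b hb
    set v : X := b - t₀ with hv
    set c : ℝ → X := fun θ => t₀ + θ • v with hc
    have hmemc : ∀ θ ∈ Set.Icc (0:ℝ) 1, c θ ∈ Metric.closedBall t₀ R := by
      intro θ hθ
      rw [Metric.mem_closedBall, dist_eq_norm]
      have hct : c θ - t₀ = θ • v := by simp [hc]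
      rw [hct, norm_smul, Real.norm_of_nonneg hθ.1]
      calc θ * ‖v‖ ≤ 1 * ‖v‖ := by
            apply mul_le_mul_of_nonneg_right hθ.2 (norm_nonneg _)
        _ = ‖v‖ := one_mul _
        _ ≤ R := hb
    set f : ℝ → X := fun θ => g (c θ) - g t₀ with hf
    set f' : ℝ → X := fun θ => (G (c θ)) v with hf'
    have hder : ∀ θ ∈ Set.Icc (0:ℝ) 1, HasDerivAt f (f' θ) θ := by
      intro θ hθ
      have hc' : HasDerivAt c v θ := by
        have h := (((hasDerivAt_id θ).smul_const v).const_add t₀)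
        rw [one_smul] at h
        exact h
      exact ((hg (c θ) (hmemc θ hθ)).comp_hasDerivAt θ hc').sub_const (g t₀)
    set B : ℝ → ℝ := fun θ => L / 2 * ‖v‖ ^ 2 * θ ^ 2 with hB
    set B' : ℝ → ℝ := fun θ => L * ‖v‖ ^ 2 * θ with hB'
    have hBder : ∀ θ : ℝ, HasDerivAt B (B' θ) θ := by
      intro θ
      have := (hasDerivAt_pow 2 θ).const_mul (L / 2 * ‖v‖ ^ 2)
      exact this.congr_deriv (by simp only [hB']; ring)
    have hbound : ∀ θ ∈ Set.Ico (0:ℝ) 1, ‖f' θ‖ ≤ B' θ := by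
      intro θ hθ
      have h1 : ‖f' θ‖ ≤ ‖G (c θ)‖ * ‖v‖ := (G (c θ)).le_opNorm v
      have h2 : ‖G (c θ)‖ ≤ L * ‖c θ - t₀‖ :=
        hGnorm (c θ) (hmemc θ ⟨hθ.1, le_of_lt hθ.2⟩)
      have h3 : c θ - t₀ = θ • v := by simp [hc]
      have h4 : ‖c θ - t₀‖ = θ * ‖v‖ := by
        rw [h3, norm_smul, Real.norm_of_nonneg hθ.1]
      calc ‖f' θ‖ ≤ ‖G (c θ)‖ * ‖v‖ := h1
        _ ≤ L * ‖c θ - t₀‖ * ‖v‖ :=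
            mul_le_mul_of_nonneg_right h2 (norm_nonneg _)
        _ = B' θ := by rw [h4, hB']; ring
    have hcont : ContinuousOn f (Set.Icc (0:ℝ) 1) := fun θ hθ =>
      (hder θ hθ).continuousAt.continuousWithinAt
    have ha : ‖f 0‖ ≤ B 0 := by
      have : f 0 = 0 := by simp [hf, hc]
      rw [this, hB]; simp
    have := image_norm_le_of_norm_deriv_right_le_deriv_boundary hcont
      (fun θ hθ => (hder θ (Set.Ico_subset_Icc_self hθ)).hasDerivWithinAt) ha hBder hbound
      (Set.right_mem_Icc.2 zero_le_one)
    have hf1 : f 1 = g b - g t₀ := by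
      rw [hf, hc]; simp [hv]
    rw [hf1] at this
    calc ‖g b - g t₀‖ ≤ B 1 := this
      _ = L / 2 * ‖b - t₀‖ ^ 2 := by rw [hB]; ring
  -- Lipschitz estimate on the small ball
  have hsub : Metric.closedBall t₀ (q / L) ⊆ Metric.closedBall t₀ R :=
    Metric.closedBall_subset_closedBall hqLR
  have hlip : ∀ a ∈ Metric.closedBall t₀ (q / L), ∀ b ∈ Metric.closedBall t₀ (q / L),
      ‖g b - g a‖ ≤ q * ‖b - a‖ := by
    intro a ha b hb
    refine (convex_closedBall t₀ (q / L)).norm_image_sub_le_of_norm_hasFDerivWithin_le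
      (fun x hx => (hg x (hsub hx)).hasFDerivWithinAt) (fun x hx => ?_) ha hb
    have h1 : ‖G x‖ ≤ L * ‖x - t₀‖ := hGnorm x (hsub hx)
    have h2 : ‖x - t₀‖ ≤ q / L := by
      rw [← dist_eq_norm]; exact Metric.mem_closedBall.1 hx
    calc ‖G x‖ ≤ L * ‖x - t₀‖ := h1
      _ ≤ L * (q / L) := mul_le_mul_of_nonneg_left h2 (le_of_lt hL)
      _ = q := by field_simp
  have hgt₀ : ‖g t₀ - t₀‖ ≤ η := by
    have : g t₀ - t₀ = -((A.symm : X →L[ℝ] X) (F t₀)) := by rw [hgdef]; simp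
    rw [this, norm_neg]; exact hstep
  have hseqg : ∀ n, seq (n + 1) = g (seq n) := fun n => hseq n
  -- the majorant sequence
  set r : ℕ → ℝ := nkr η L with hr
  have hr0 : ∀ n, 0 ≤ r n ∧ r n ≤ q / L := by
    intro n
    induction n with
    | zero => exact ⟨le_refl 0, le_of_lt hqLpos⟩
    | succ n ih =>
      obtain ⟨h1, h2⟩ := ih
      constructor
      · rw [hr, nkr_succ, ← hr]
        positivity
      · rw [hr, nkr_succ, ← hr]
        rw [le_div_iff₀ hL]
        have hLr : L * r n ≤ q := by
          rw [← le_div_iff₀' hL]; exact h2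
        nlinarith [mul_nonneg (sub_nonneg.2 hLr) (by positivity : (0:ℝ) ≤ q + L * r n)]
  have hball : ∀ n, ‖seq n - t₀‖ ≤ r n := by
    intro n
    induction n with
    | zero => simp [hseq0, hr, nkr]
    | succ n ih =>
      have hmemR : ‖seq n - t₀‖ ≤ R :=
        le_trans ih (le_trans (hr0 n).2 hqLR)
      have h1 : ‖g (seq n) - g t₀‖ ≤ L / 2 * ‖seq n - t₀‖ ^ 2 := hquad _ hmemR
      have h2 : seq (n + 1) - t₀ = (g (seq n) - g t₀) + (g t₀ - t₀) := by
        rw [hseqg n]; abel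
      have h3 : L / 2 * ‖seq n - t₀‖ ^ 2 ≤ L / 2 * (r n) ^ 2 := by
        have hp := pow_le_pow_left₀ (norm_nonneg (seq n - t₀)) ih 2
        exact mul_le_mul_of_nonneg_left hp (by positivity)
      calc ‖seq (n + 1) - t₀‖ ≤ ‖g (seq n) - g t₀‖ + ‖g t₀ - t₀‖ := by
            rw [h2]; exact norm_add_le _ _
        _ ≤ L / 2 * (r n) ^ 2 + η := by linarith
        _ = r (n + 1) := by rw [hr, nkr_succ, ← hr]; ring
  have hmem : ∀ n, seq n ∈ Metric.closedBall t₀ (q / L) := by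
    intro n
    rw [Metric.mem_closedBall, dist_eq_norm]
    exact le_trans (hball n) (hr0 n).2
  -- geometric decay of consecutive differences
  have hdiff : ∀ n, ‖seq (n + 1) - seq n‖ ≤ q ^ n * ‖seq 1 - seq 0‖ := by
    intro n
    induction n with
    | zero => simp
    | succ n ih =>
      have h1 : ‖seq (n + 2) - seq (n + 1)‖ ≤ q * ‖seq (n + 1) - seq n‖ := by
        have h := hlip (seq n) (hmem n) (seq (n + 1)) (hmem (n + 1))
        rw [← hseqg (n + 1), ← hseqg n] at h
        exact h
      calc ‖seq (n + 2) - seq (n + 1)‖ ≤ q * ‖seq (n + 1) - seq n‖ := h1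
        _ ≤ q * (q ^ n * ‖seq 1 - seq 0‖) :=
            mul_le_mul_of_nonneg_left ih (le_of_lt hq0)
        _ = q ^ (n + 1) * ‖seq 1 - seq 0‖ := by ring
  have h10 : ‖seq 1 - seq 0‖ ≤ η := by
    rw [hseq 0, hseq0]; simpa using hstep
  have hdiffη : ∀ n, ‖seq (n + 1) - seq n‖ ≤ q ^ n * η := fun n =>
    le_trans (hdiff n) (mul_le_mul_of_nonneg_left h10 (pow_nonneg (le_of_lt hq0) n))
  intro n
  refine ⟨hdiff n, ?_⟩
  -- bound on distance to the limit
  have hcauchy : ∀ m, n ≤ m → ‖seq n - seq m‖ ≤ q ^ n / (1 - q) * η := by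
    intro m hnm
    have h1 : dist (seq n) (seq m) ≤ ∑ i ∈ Finset.Ico n m, dist (seq i) (seq (i + 1)) :=
      dist_le_Ico_sum_dist seq hnm
    have h2 : ∑ i ∈ Finset.Ico n m, dist (seq i) (seq (i + 1)) ≤
        ∑ i ∈ Finset.Ico n m, q ^ i * η := by
      apply Finset.sum_le_sum
      intro i _
      rw [dist_eq_norm, norm_sub_rev]
      exact hdiffη i
    have h3 : ∑ i ∈ Finset.Ico n m, q ^ i * η ≤ q ^ n / (1 - q) * η := by
      rw [← Finset.sum_mul]
      apply mul_le_mul_of_nonneg_right _ (le_of_lt hη)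
      rw [Finset.sum_Ico_eq_sum_range]
      have h4 : ∑ i ∈ Finset.range (m - n), q ^ (n + i) =
          q ^ n * ∑ i ∈ Finset.range (m - n), q ^ i := by
        rw [Finset.mul_sum]
        apply Finset.sum_congr rfl
        intro i _
        rw [pow_add]
      rw [h4]
      have h5 : ∑ i ∈ Finset.range (m - n), q ^ i ≤ 1 / (1 - q) := by
        have h6 : ∑ i ∈ Finset.range (m - n), q ^ i = (1 - q ^ (m - n)) / (1 - q) := by
          rw [geom_sum_eq (ne_of_lt hq1)]
          rw [div_eq_div_iff (by linarith) (by linarith)]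
          ring
        have h7 : (1 : ℝ) - q ^ (m - n) ≤ 1 := by
          have := pow_nonneg (le_of_lt hq0) (m - n)
          linarith
        rw [h6]
        gcongr
      calc q ^ n * ∑ i ∈ Finset.range (m - n), q ^ i ≤ q ^ n * (1 / (1 - q)) :=
            mul_le_mul_of_nonneg_left h5 (pow_nonneg (le_of_lt hq0) n)
        _ = q ^ n / (1 - q) := by ring
    rw [← dist_eq_norm]
    exact le_trans h1 (le_trans h2 h3)
  have htend2 : Filter.Tendsto (fun m => ‖seq n - seq m‖) Filter.atTop
      (nhds ‖seq n - tstar‖) :=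
    ((tendsto_const_nhds.sub htend).norm)
  exact le_of_tendsto htend2 (Filter.eventually_atTop.2 ⟨n, hcauchy⟩)
end

section
/- Contraction property of the modified Newton map: under the Newton–Kantorovich hypotheses, the map G(t) = t − J(t₀)⁻¹F(t) is Lipschitz with constant q = 1 − √(1 − 2ηL) < 1 on the closed ball B(t₀, (1 − √(1 − 2Lη))/L), and maps this ball into itself. -/
open Metric

/-- Contraction property of the modified Newton map `G(t) = t − J(t₀)⁻¹ F(t)`
on the ball of radius `r* = (1 − √(1 − 2Lη))/L`: it is `q`-Lipschitz there
with `q = 1 − √(1 − 2ηL) < 1`, and maps the ball into itself. -/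
theorem modified_newton_map_contraction
    {X : Type*} [NormedAddCommGroup X] [NormedSpace ℝ X]
    [FiniteDimensional ℝ X]
    (N : ℕ) (hN : Module.finrank ℝ X = N)
    (F : X → X) (J : X → X →L[ℝ] X)
    (t₀ : X) (R η L : ℝ) (hR : 0 < R) (hη : 0 < η) (hL : 0 < L)
    (A : X ≃L[ℝ] X) (hA : (A : X →L[ℝ] X) = J t₀)
    (hF : ∀ t ∈ Metric.closedBall t₀ R, HasFDerivAt F (J t) t)
    (hstep : ‖(A.symm : X →L[ℝ] X) (F t₀)‖ ≤ η)
    (hLip : ∀ t ∈ Metric.closedBall t₀ R,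
      ‖(A.symm : X →L[ℝ] X).comp (J t) - ContinuousLinearMap.id ℝ X‖ ≤
        L * ‖t - t₀‖)
    (hηL : η * L < 1 / 2)
    (hRbig : (1 - Real.sqrt (1 - 2 * L * η)) / L ≤ R) :
    (1 - Real.sqrt (1 - 2 * η * L)) < 1 ∧
    (∀ x ∈ Metric.closedBall t₀ ((1 - Real.sqrt (1 - 2 * L * η)) / L),
      ∀ y ∈ Metric.closedBall t₀ ((1 - Real.sqrt (1 - 2 * L * η)) / L),
        ‖(x - (A.symm : X →L[ℝ] X) (F x)) - (y - (A.symm : X →L[ℝ] X) (F y))‖ ≤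
          (1 - Real.sqrt (1 - 2 * η * L)) * ‖x - y‖) ∧
    Set.MapsTo (fun t => t - (A.symm : X →L[ℝ] X) (F t))
      (Metric.closedBall t₀ ((1 - Real.sqrt (1 - 2 * L * η)) / L))
      (Metric.closedBall t₀ ((1 - Real.sqrt (1 - 2 * L * η)) / L)) := by
  have harg : 1 - 2 * η * L = 1 - 2 * L * η := by ring
  rw [harg]
  set s : ℝ := Real.sqrt (1 - 2 * L * η) with hs_def
  have harg_pos : 0 < 1 - 2 * L * η := by nlinarith
  have hs_pos : 0 < s := Real.sqrt_pos.mpr harg_pos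
  have hs_sq : s ^ 2 = 1 - 2 * L * η := Real.sq_sqrt harg_pos.le
  have hs_le1 : s ≤ 1 := by
    rw [hs_def]
    calc Real.sqrt (1 - 2 * L * η) ≤ Real.sqrt 1 := by
          apply Real.sqrt_le_sqrt; nlinarith
      _ = 1 := Real.sqrt_one
  set r : ℝ := (1 - s) / L with hr_def
  have hr_nonneg : 0 ≤ r := div_nonneg (by linarith) hL.le
  have hLr : L * r = 1 - s := by rw [hr_def, mul_div_assoc']; exact mul_div_cancel_left₀ _ hL.ne'
  have hq_lt1 : 1 - s < 1 := by linarith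
  have hsub : Metric.closedBall t₀ r ⊆ Metric.closedBall t₀ R :=
    Metric.closedBall_subset_closedBall hRbig
  -- derivative of G
  set G : X → X := fun t => t - (A.symm : X →L[ℝ] X) (F t) with hG_def
  set G' : X → X →L[ℝ] X := fun t =>
    ContinuousLinearMap.id ℝ X - (A.symm : X →L[ℝ] X).comp (J t) with hG'_def
  have hG : ∀ t ∈ Metric.closedBall t₀ R, HasFDerivAt G (G' t) t := by
    intro t ht
    exact (hasFDerivAt_id t).sub
      (((A.symm : X →L[ℝ] X).hasFDerivAt).comp t (hF t ht))
  have hG'norm : ∀ t ∈ Metric.closedBall t₀ R, ‖G' t‖ ≤ L * ‖t - t₀‖ := by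
    intro t ht
    have := hLip t ht
    rwa [hG'_def, norm_sub_rev]
  -- Lipschitz part
  have hlip : ∀ x ∈ Metric.closedBall t₀ r, ∀ y ∈ Metric.closedBall t₀ r,
      ‖G x - G y‖ ≤ (1 - s) * ‖x - y‖ := by
    intro x hx y hy
    have := (convex_closedBall t₀ r).norm_image_sub_le_of_norm_hasFDerivWithin_le
      (f := G) (f' := G') (C := 1 - s)
      (fun u hu => (hG u (hsub hu)).hasFDerivWithinAt)
      (fun u hu => by
        have h1 := hG'norm u (hsub hu)
        have h2 : ‖u - t₀‖ ≤ r := by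
          rw [← dist_eq_norm]; exact Metric.mem_closedBall.mp hu
        calc ‖G' u‖ ≤ L * ‖u - t₀‖ := h1
          _ ≤ L * r := by nlinarith [norm_nonneg (u - t₀)]
          _ = 1 - s := hLr) hy hx
    exact this
  refine ⟨hq_lt1, fun x hx y hy => hlip x hx y hy, ?_⟩
  -- MapsTo: quadratic estimate ‖G t - G t₀‖ ≤ L/2 * ‖t - t₀‖²
  intro t ht
  have ht₀ : t₀ ∈ Metric.closedBall t₀ r := Metric.mem_closedBall_self hr_nonneg
  set d : X := t - t₀ with hd_def
  have hd_le : ‖d‖ ≤ r := by rw [← dist_eq_norm]; exact ht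
  have hmem : ∀ θ : ℝ, θ ∈ Set.Icc (0:ℝ) 1 → t₀ + θ • d ∈ Metric.closedBall t₀ R := by
    intro θ hθ
    apply hsub
    rw [Metric.mem_closedBall, dist_eq_norm, add_sub_cancel_left, norm_smul,
      Real.norm_eq_abs, abs_of_nonneg hθ.1]
    nlinarith [norm_nonneg d, hθ.2]
  set g : ℝ → X := fun θ => G (t₀ + θ • d) - G t₀ with hg_def
  set g' : ℝ → X := fun θ => G' (t₀ + θ • d) d with hg'_def
  have hg_deriv : ∀ θ ∈ Set.Icc (0:ℝ) 1, HasDerivAt g (g' θ) θ := by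
    intro θ hθ
    have hline : HasDerivAt (fun θ : ℝ => t₀ + θ • d) d θ := by
      simpa using ((hasDerivAt_id θ).smul_const d).const_add t₀
    have := (hG _ (hmem θ hθ)).comp_hasDerivAt θ hline
    simpa [hg_def, hg'_def] using this.sub_const (G t₀)
  have key : ∀ θ ∈ Set.Icc (0:ℝ) 1, ‖g θ‖ ≤ L * ‖d‖ ^ 2 * θ ^ 2 / 2 := by
    intro θ hθ
    refine image_norm_le_of_norm_deriv_right_le_deriv_boundary
      (f := g) (f' := g') (a := 0) (b := 1)
      (B := fun θ => L * ‖d‖ ^ 2 * θ ^ 2 / 2) (B' := fun θ => L * ‖d‖ ^ 2 * θ)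
      ?_ ?_ ?_ ?_ ?_ hθ
    · exact fun u hu => ((hg_deriv u hu).continuousAt).continuousWithinAt
    · exact fun u hu => (hg_deriv u ⟨hu.1, hu.2.le⟩).hasDerivWithinAt
    · simp [hg_def]
    · intro u
      have : HasDerivAt (fun θ : ℝ => L * ‖d‖ ^ 2 * θ ^ 2 / 2) (L * ‖d‖ ^ 2 * (2 * u) / 2) u := by
        simpa using ((hasDerivAt_pow 2 u).const_mul (L * ‖d‖ ^ 2)).div_const 2
      convert this using 1; ring
    · intro u hu
      have h1 : ‖g' u‖ ≤ ‖G' (t₀ + u • d)‖ * ‖d‖ := (G' (t₀ + u • d)).le_opNorm d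
      have h2 : ‖G' (t₀ + u • d)‖ ≤ L * (u * ‖d‖) := by
        have := hG'norm _ (hmem u ⟨hu.1, hu.2.le⟩)
        simpa [norm_smul, Real.norm_eq_abs, abs_of_nonneg hu.1] using this
      calc ‖g' u‖ ≤ ‖G' (t₀ + u • d)‖ * ‖d‖ := h1
        _ ≤ L * (u * ‖d‖) * ‖d‖ := by
            nlinarith [norm_nonneg d, norm_nonneg (G' (t₀ + u • d))]
        _ = L * ‖d‖ ^ 2 * u := by ring
  have hquad : ‖G t - G t₀‖ ≤ L * ‖d‖ ^ 2 / 2 := by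
    have h := key 1 ⟨zero_le_one, le_refl 1⟩
    have he : t₀ + (1:ℝ) • d = t := by rw [one_smul, hd_def]; abel
    simp only [hg_def] at h
    rw [he] at h
    simpa using h
  have hGt₀ : ‖G t₀ - t₀‖ ≤ η := by
    simpa [hG_def] using hstep
  rw [Metric.mem_closedBall, dist_eq_norm]
  have hstep2 : L * ‖d‖ ^ 2 / 2 + η ≤ r := by
    have e1 : (L * r) ^ 2 = (1 - s) ^ 2 := by rw [hLr]
    have key2 : L * (L * r ^ 2 / 2 + η) = L * r := by
      linear_combination e1 / 2 + hs_sq / 2 - hLr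
    have hroot : L * r ^ 2 / 2 + η = r := mul_left_cancel₀ hL.ne' key2
    have hmono : L * ‖d‖ ^ 2 / 2 ≤ L * r ^ 2 / 2 := by
      have h2 : ‖d‖ ^ 2 ≤ r ^ 2 := pow_le_pow_left₀ (norm_nonneg d) hd_le 2
      have := mul_le_mul_of_nonneg_left h2 hL.le
      linarith
    linarith
  calc ‖G t - t₀‖ = ‖(G t - G t₀) + (G t₀ - t₀)‖ := by rw [sub_add_sub_cancel]
    _ ≤ ‖G t - G t₀‖ + ‖G t₀ - t₀‖ := norm_add_le _ _
    _ ≤ L * ‖d‖ ^ 2 / 2 + η := add_le_add hquad hGt₀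
    _ ≤ r := hstep2
end
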